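/- For every k ≥ 0 and every n ≥ k + 2, the number of permutations of length n with exactly k inversions that avoid both 1324 and 1342 equals op(k), the number of overpartitions of k. -/

import Mathlib

/-- A permutation `π` of length `n` (as a bijection of `Fin n`, position `i` has value `π i`)
contains the pattern `p` of length `m` if some subsequence of `π` is order-isomorphic to `p`. -/
def Contains {n m : ℕ} (π : Equiv.Perm (Fin n)) (p : Equiv.Perm (Fin m)) : Prop :=
  ∃ f : Fin m → Fin n, StrictMono f ∧ ∀ a b : Fin m, π (f a) < π (f b) ↔ p a < p b

/-- `π` avoids the pattern `p`. -/
def Avoids {n m : ℕ} (π : Equiv.Perm (Fin n)) (p : Equiv.Perm (Fin m)) : Prop :=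
  ¬ Contains π p

/-- The number of inversions of `π`: pairs of positions `i < j` with `π i > π j`. -/
noncomputable def invCount {n : ℕ} (π : Equiv.Perm (Fin n)) : ℕ :=
  Nat.card {ij : Fin n × Fin n // ij.1 < ij.2 ∧ π ij.2 < π ij.1}

def p1324 : Equiv.Perm (Fin 4) := ⟨![0,2,1,3], ![0,2,1,3], by decide, by decide⟩
def p1342 : Equiv.Perm (Fin 4) := ⟨![0,2,3,1], ![0,3,1,2], by decide, by decide⟩

/-- `op k`: the number of pairs `(λ, μ)` of integer partitions with `|λ| + |μ| = k`
such that all parts of `μ` are distinct; this equals the number of overpartitions of `k`. -/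
noncomputable def op (k : ℕ) : ℕ :=
  ∑ i ∈ Finset.range (k + 1),
    Nat.card (Nat.Partition i) * Nat.card {μ : Nat.Partition (k - i) // μ.parts.Nodup}

set_option linter.unusedSectionVars false
set_option linter.unusedVariables false

namespace AV

variable {n : ℕ}

def lcode (π : Equiv.Perm (Fin n)) (j : Fin n) : ℕ :=
  (Finset.univ.filter fun l => j < l ∧ π l < π j).card

theorem card_gt (j : Fin n) : (Finset.univ.filter fun l => j < l).card = n - 1 - (j : ℕ) := by
  rw [show (Finset.univ.filter fun l => j < l) = Finset.Ioi j by ext l; simp]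
  exact Fin.card_Ioi _

theorem lcode_le (π : Equiv.Perm (Fin n)) (j : Fin n) : lcode π j + (j : ℕ) + 1 ≤ n := by
  have h1 : lcode π j ≤ n - 1 - (j:ℕ) := by
    rw [← card_gt j]
    exact Finset.card_le_card (fun l hl => by
      simp only [Finset.mem_filter] at *; exact ⟨hl.1, hl.2.1⟩)
  have := j.2
  omega

theorem invCount_eq_sum (π : Equiv.Perm (Fin n)) : invCount π = ∑ j : Fin n, lcode π j := by
  classical
  rw [invCount, Nat.card_eq_fintype_card, Fintype.card_subtype]
  rw [Finset.card_eq_sum_card_fiberwise (f := Prod.fst) (t := Finset.univ)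
    (fun x _ => Finset.mem_univ _)]
  refine Finset.sum_congr rfl fun j _ => ?_
  rw [lcode]
  rw [show (Finset.filter (fun a => a.1 = j)
      (Finset.filter (fun x : Fin n × Fin n => x.1 < x.2 ∧ π x.2 < π x.1) Finset.univ))
      = (Finset.univ.filter fun l => j < l ∧ π l < π j).map
        ⟨fun l => (j, l), fun a b hab => by simpa using hab⟩ from ?_]
  · exact Finset.card_map _
  · ext ⟨a, b⟩
    simp only [Finset.mem_filter, Finset.mem_univ, true_and, Finset.mem_map,
      Function.Embedding.coeFn_mk, Prod.mk.injEq]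
    constructor
    · rintro ⟨⟨h1, h2⟩, h3⟩
      exact ⟨b, ⟨by rw [← h3]; exact h1, by rw [← h3]; exact h2⟩, by subst h3; rfl⟩
    · rintro ⟨l, ⟨h1, h2⟩, h34⟩
      obtain ⟨h3, h4⟩ := Prod.mk.inj (show (j, l) = (a, b) from h34)
      subst h3; subst h4
      exact ⟨⟨h1, h2⟩, rfl⟩

theorem lcode_eq_vals (π : Equiv.Perm (Fin n)) (j : Fin n) :
    lcode π j = (Finset.univ.filter fun v => v < π j ∧ j < π.symm v).card := by
  rw [lcode]
  apply Finset.card_bij' (fun l _ => π l) (fun v _ => π.symm v)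
  · intro l hl
    simp only [Finset.mem_filter, Finset.mem_univ, true_and] at *
    exact ⟨hl.2, by simpa using hl.1⟩
  · intro v hv
    simp only [Finset.mem_filter, Finset.mem_univ, true_and] at *
    exact ⟨hv.2, by simpa using hv.1⟩
  · intro l _; simp
  · intro v _; simp

theorem lcode_injective (π σ : Equiv.Perm (Fin n)) (h : ∀ j, lcode π j = lcode σ j) : π = σ := by
  classical
  by_contra hne
  have hD : (Finset.univ.filter fun i => π i ≠ σ i).Nonempty := by
    by_contra hD
    apply hne
    ext i : 1
    by_contra hi
    exact hD ⟨i, by simpa using hi⟩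
  set i := (Finset.univ.filter fun i => π i ≠ σ i).min' hD with hi
  have hiD : π i ≠ σ i := by
    have := (Finset.univ.filter fun i => π i ≠ σ i).min'_mem hD
    simpa [← hi] using this
  have hmin : ∀ l, l < i → π l = σ l := by
    intro l hl
    by_contra hc
    have := (Finset.univ.filter fun i => π i ≠ σ i).min'_le l (by simpa using hc)
    rw [← hi] at this
    exact absurd hl (not_lt.2 this)
  -- aux : if π i < σ i then lcode π i < lcode σ i
  have aux : ∀ (π σ : Equiv.Perm (Fin n)), (∀ l, l < i → π l = σ l) → π i < σ i →
      lcode π i < lcode σ i := by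
    intro π σ hpre hlt
    rw [lcode_eq_vals, lcode_eq_vals]
    apply Finset.card_lt_card
    constructor
    · intro v hv
      simp only [Finset.mem_filter, Finset.mem_univ, true_and] at *
      refine ⟨lt_trans hv.1 hlt, ?_⟩
      rcases lt_trichotomy (σ.symm v) i with h' | h' | h'
      · exfalso
        have h1 : π (σ.symm v) = v := by rw [hpre _ h']; simp
        have h2 : π.symm v = σ.symm v := by
          rw [Equiv.symm_apply_eq]; exact h1.symm
        rw [h2] at hv
        exact absurd h' (not_lt.2 hv.2.le)
      · exfalso
        have : v = σ i := by rw [← h']; simp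
        rw [this] at hv
        exact absurd hlt (not_lt.2 hv.1.le)
      · exact h'
    · intro hsub
      have : π i ∈ Finset.univ.filter fun v => v < σ i ∧ i < σ.symm v := by
        simp only [Finset.mem_filter, Finset.mem_univ, true_and]
        refine ⟨hlt, ?_⟩
        rcases lt_trichotomy (σ.symm (π i)) i with h' | h' | h'
        · exfalso
          have h1 : σ (σ.symm (π i)) = π i := by simp
          rw [← hpre _ h'] at h1
          have := π.injective h1
          rw [this] at h'
          exact lt_irrefl _ h'
        · exfalso
          have : π i = σ i := by simpa using congrArg σ h'
          exact absurd hlt (by rw [this]; exact lt_irrefl _)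
        · exact h'
      have := hsub this
      simp only [Finset.mem_filter, Finset.mem_univ, true_and] at this
      exact lt_irrefl _ this.1
  rcases lt_trichotomy (π i) (σ i) with h' | h' | h'
  · have := aux π σ hmin h'
    rw [h i] at this; exact lt_irrefl _ this
  · exact hiD h'
  · have := aux σ π (fun l hl => (hmin l hl).symm) h'
    rw [h i] at this; exact lt_irrefl _ this


variable {n : ℕ}

def decode : {n : ℕ} → (Fin n → ℕ) → Equiv.Perm (Fin n)
  | 0, _ => 1
  | (m+1), c =>
      ((finSuccEquiv' 0).trans ((decode fun i => c i.succ).optionCongr)).trans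
        (finSuccEquiv' ⟨min (c 0) m, Nat.lt_succ_of_le (Nat.min_le_right _ _)⟩).symm

theorem decode_zero {m : ℕ} (c : Fin (m+1) → ℕ) :
    decode c 0 = ⟨min (c 0) m, Nat.lt_succ_of_le (Nat.min_le_right _ _)⟩ := by
  show (finSuccEquiv' _).symm ((decode fun i => c i.succ).optionCongr (finSuccEquiv' 0 0)) = _
  rw [finSuccEquiv'_zero, finSuccEquiv_zero]
  simp [finSuccEquiv'_symm_none]

theorem decode_succ {m : ℕ} (c : Fin (m+1) → ℕ) (i : Fin m) :
    decode c i.succ = Fin.succAbove ⟨min (c 0) m, Nat.lt_succ_of_le (Nat.min_le_right _ _)⟩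
      ((decode fun i => c i.succ) i) := by
  show (finSuccEquiv' _).symm ((decode fun i => c i.succ).optionCongr (finSuccEquiv' 0 i.succ)) = _
  rw [finSuccEquiv'_zero, finSuccEquiv_succ]
  simp [finSuccEquiv'_symm_some]

theorem lcode_zero {m : ℕ} (π : Equiv.Perm (Fin (m+1))) : lcode π 0 = (π 0 : ℕ) := by
  rw [lcode]
  rw [show (Finset.univ.filter fun l => 0 < l ∧ π l < π 0)
      = (Finset.univ.filter fun v => v < π 0).map ⟨fun v => π.symm v, π.symm.injective⟩ from ?_]
  · rw [Finset.card_map]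
    rw [show (Finset.univ.filter fun v => v < π 0) = Finset.Iio (π 0) by ext v; simp]
    rw [Fin.card_Iio]
  · ext l
    simp only [Finset.mem_filter, Finset.mem_univ, true_and, Finset.mem_map,
      Function.Embedding.coeFn_mk]
    constructor
    · rintro ⟨h1, h2⟩
      exact ⟨π l, h2, by simp⟩
    · rintro ⟨v, hv, h⟩
      subst h
      refine ⟨?_, by simpa using hv⟩
      rw [Fin.pos_iff_ne_zero]
      intro h0
      have : v = π 0 := by rw [← h0]; simp
      rw [this] at hv
      exact absurd hv (lt_irrefl _)

theorem lcode_succ {m : ℕ} (π : Equiv.Perm (Fin (m+1))) (σ : Equiv.Perm (Fin m))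
    (a : Fin (m+1)) (hs : ∀ i, π i.succ = Fin.succAbove a (σ i)) (i : Fin m) :
    lcode π i.succ = lcode σ i := by
  rw [lcode, lcode]
  rw [show (Finset.univ.filter fun l => i.succ < l ∧ π l < π i.succ)
      = (Finset.univ.filter fun l => i < l ∧ σ l < σ i).map
        ⟨Fin.succ, Fin.succ_injective m⟩ from ?_]
  · exact Finset.card_map _
  · ext l
    simp only [Finset.mem_filter, Finset.mem_univ, true_and, Finset.mem_map,
      Function.Embedding.coeFn_mk]
    constructor
    · intro ⟨h1, h2⟩
      have hl0 : l ≠ 0 := by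
        intro h0; rw [h0] at h1; exact absurd h1 (by simp [Fin.lt_def])
      obtain ⟨l', rfl⟩ : ∃ l', l = l'.succ := ⟨l.pred hl0, by simp⟩
      rw [hs, hs] at h2
      refine ⟨l', ⟨by simpa [Fin.succ_lt_succ_iff] using h1, ?_⟩, rfl⟩
      exact (Fin.succAbove_lt_succAbove_iff).mp h2
    · rintro ⟨l', ⟨h1, h2⟩, rfl⟩
      refine ⟨by simpa [Fin.succ_lt_succ_iff] using h1, ?_⟩
      rw [hs, hs]
      exact (Fin.succAbove_lt_succAbove_iff).mpr h2

theorem lcode_decode : ∀ {n : ℕ} (c : Fin n → ℕ), (∀ i : Fin n, c i + (i : ℕ) + 1 ≤ n) →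
    ∀ i, lcode (decode c) i = c i := by
  intro n
  induction n with
  | zero => intro c _ i; exact absurd i.2 (by omega)
  | succ m ih =>
    intro c hc i
    induction i using Fin.cases with
    | zero =>
      rw [lcode_zero, decode_zero]
      have := hc 0
      simp only [Fin.val_zero] at this
      simp only []
      omega
    | succ i =>
      rw [lcode_succ (decode c) (decode fun i => c i.succ) _ (fun i => decode_succ c i)]
      exact ih _ (fun i => by have := hc i.succ; simp at this; omega) i


variable {n : ℕ}

def Cond (π : Equiv.Perm (Fin n)) : Prop :=
  ∀ i j : Fin n, i < j → lcode π i < lcode π j → lcode π j + (j : ℕ) + 1 = n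

theorem gt_of_lcode_lt {π : Equiv.Perm (Fin n)} {j : Fin n}
    (hj : lcode π j + (j : ℕ) + 1 ≠ n) : ∃ l, j < l ∧ π j < π l := by
  by_contra hcon
  push_neg at hcon
  apply hj
  have : (Finset.univ.filter fun l => j < l ∧ π l < π j)
      = (Finset.univ.filter fun l => j < l) := by
    ext l
    simp only [Finset.mem_filter, Finset.mem_univ, true_and, and_iff_left_iff_imp]
    intro hl
    have h1 := hcon l hl
    have h2 : π l ≠ π j := fun h => absurd (π.injective h) (by rintro rfl; exact lt_irrefl _ hl)
    exact lt_of_le_of_ne h1 h2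
  rw [lcode, this, card_gt]
  have := j.2
  omega

theorem lt_of_lcode_max {π : Equiv.Perm (Fin n)} {j : Fin n}
    (hj : lcode π j + (j : ℕ) + 1 = n) : ∀ l, j < l → π l < π j := by
  intro l hl
  by_contra hcon
  have h2 : π l ≠ π j := fun h => absurd (π.injective h) (by rintro rfl; exact lt_irrefl _ hl)
  have hgt : π j < π l := lt_of_le_of_ne (not_lt.mp hcon) (Ne.symm h2)
  have hss : (Finset.univ.filter fun x => j < x ∧ π x < π j)
      ⊂ (Finset.univ.filter fun x => j < x) := by
    constructor
    · intro x hx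
      simp only [Finset.mem_filter, Finset.mem_univ, true_and] at *
      exact hx.1
    · intro hsub
      have := hsub (by simp only [Finset.mem_filter, Finset.mem_univ, true_and]; exact hl)
      simp only [Finset.mem_filter, Finset.mem_univ, true_and] at this
      exact absurd hgt (not_lt.2 this.2.le)
  have hcard := Finset.card_lt_card hss
  rw [card_gt] at hcard
  rw [lcode] at hj
  have := j.2
  omega

theorem strictMono_vec4 {a b c d : Fin n} (h1 : a < b) (h2 : b < c) (h3 : c < d) :
    StrictMono ![a, b, c, d] := by
  intro x y hxy
  have ha := a.2; have hb := b.2; have hc := c.2; have hd := d.2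
  rw [Fin.lt_def] at h1 h2 h3 hxy ⊢
  fin_cases x <;> fin_cases y <;> simp_all <;> omega

theorem contains_of_chain {π : Equiv.Perm (Fin n)} {i j e l : Fin n}
    (h1 : i < j) (h2 : j < e) (h2' : j < l) (hel : e ≠ l)
    (v1 : π i < π e) (v2 : π e < π j) (v3 : π j < π l) :
    Contains π p1324 ∨ Contains π p1342 := by
  have q1 : (π i : ℕ) < π e := v1
  have q2 : (π e : ℕ) < π j := v2
  have q3 : (π j : ℕ) < π l := v3
  rcases lt_or_gt_of_ne hel with h | h
  · left
    refine ⟨![i, j, e, l], strictMono_vec4 h1 h2 h, ?_⟩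
    intro a b
    fin_cases a <;> fin_cases b <;>
      simp only [Fin.zero_eta, Fin.mk_one, Fin.reduceFinMk, Matrix.cons_val_zero,
        Matrix.cons_val_one, Matrix.cons_val_two, Matrix.cons_val_three, Matrix.head_cons,
        Matrix.tail_cons, Fin.isValue, p1324, Equiv.coe_fn_mk, Fin.lt_def] <;>
      simp only [Fin.val_zero, Fin.val_one, Fin.val_two, show ((3:Fin 4):ℕ) = 3 from rfl,
        show ((2:Fin 4):ℕ) = 2 from rfl] <;> omega
  · right
    refine ⟨![i, j, l, e], strictMono_vec4 h1 h2' h, ?_⟩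
    intro a b
    fin_cases a <;> fin_cases b <;>
      simp only [Fin.zero_eta, Fin.mk_one, Fin.reduceFinMk, Matrix.cons_val_zero,
        Matrix.cons_val_one, Matrix.cons_val_two, Matrix.cons_val_three, Matrix.head_cons,
        Matrix.tail_cons, Fin.isValue, p1342, Equiv.coe_fn_mk, Fin.lt_def] <;>
      simp only [Fin.val_zero, Fin.val_one, Fin.val_two, show ((3:Fin 4):ℕ) = 3 from rfl,
        show ((2:Fin 4):ℕ) = 2 from rfl] <;> omega

theorem not_cond_of {π : Equiv.Perm (Fin n)} {a0 b e e' : Fin n}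
    (ha : a0 < b) (he : b < e) (he' : b < e')
    (v1 : π a0 < π e) (v2 : π e < π b) (v3 : π b < π e') : ¬ Cond π := by
  intro hc
  classical
  have hAne : (Finset.univ.filter fun x => x < b ∧ π x < π e).Nonempty :=
    ⟨a0, by simp only [Finset.mem_filter, Finset.mem_univ, true_and]; exact ⟨ha, v1⟩⟩
  obtain ⟨a, haA, hmaxA⟩ : ∃ a ∈ (Finset.univ.filter fun x => x < b ∧ π x < π e),
      ∀ x ∈ (Finset.univ.filter fun x => x < b ∧ π x < π e), x ≤ a :=
    ⟨_, Finset.max'_mem _ hAne, fun x hx => Finset.le_max' _ x hx⟩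
  simp only [Finset.mem_filter, Finset.mem_univ, true_and] at haA
  obtain ⟨hab, hae⟩ := haA
  have hsub : (Finset.univ.filter fun x => a < x ∧ π x < π a)
      ⊂ (Finset.univ.filter fun x => b < x ∧ π x < π b) := by
    constructor
    · intro x hx
      simp only [Finset.mem_filter, Finset.mem_univ, true_and] at hx ⊢
      obtain ⟨hax, hxa⟩ := hx
      have hxb : π x < π b := lt_trans (lt_trans hxa hae) v2
      refine ⟨?_, hxb⟩
      rcases lt_trichotomy x b with h' | h' | h'
      · exfalso
        have hxA := hmaxA x (by
          simp only [Finset.mem_filter, Finset.mem_univ, true_and]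
          exact ⟨h', lt_trans hxa hae⟩)
        exact absurd hax (not_lt.2 hxA)
      · exfalso; rw [h'] at hxb; exact lt_irrefl _ hxb
      · exact h'
    · intro hsub
      have := hsub (by simp only [Finset.mem_filter, Finset.mem_univ, true_and]; exact ⟨he, v2⟩)
      simp only [Finset.mem_filter, Finset.mem_univ, true_and] at this
      exact absurd hae (not_lt.2 this.2.le)
  have hlt : lcode π a < lcode π b := Finset.card_lt_card hsub
  have hmax := hc a b hab hlt
  have := lt_of_lcode_max hmax e' he'
  exact absurd v3 (not_lt.2 this.le)

theorem avoids_iff (π : Equiv.Perm (Fin n)) :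
    (Avoids π p1324 ∧ Avoids π p1342) ↔ Cond π := by
  constructor
  · -- contrapose
    intro ⟨hav1, hav2⟩
    by_contra hcond
    rw [Cond] at hcond
    push_neg at hcond
    obtain ⟨i, j, hij, hlt, hne⟩ := hcond
    -- find e : j < e, π i < π e < π j
    have hse : ∃ e, j < e ∧ π e < π j ∧ π i < π e := by
      have hsub : (Finset.univ.filter fun l => j < l ∧ π l < π i)
          ⊆ (Finset.univ.filter fun l => i < l ∧ π l < π i) := by
        intro x hx
        simp only [Finset.mem_filter, Finset.mem_univ, true_and] at *
        exact ⟨lt_trans hij hx.1, hx.2⟩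
      have hcard : (Finset.univ.filter fun l => j < l ∧ π l < π i).card < lcode π j := by
        calc (Finset.univ.filter fun l => j < l ∧ π l < π i).card
            ≤ lcode π i := Finset.card_le_card hsub
          _ < lcode π j := hlt
      rw [lcode] at hcard
      have hns : ¬ ((Finset.univ.filter fun l => j < l ∧ π l < π j)
          ⊆ (Finset.univ.filter fun l => j < l ∧ π l < π i)) := fun hsub' => by
        have := Finset.card_le_card hsub'
        omega
      obtain ⟨e, heT, heS⟩ := Finset.not_subset.mp hns
      simp only [Finset.mem_filter, Finset.mem_univ, true_and, not_and] at heT heS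
      refine ⟨e, heT.1, heT.2, ?_⟩
      have h2 : ¬ π e < π i := fun hcontra => heS heT.1 hcontra
      have h3 : π e ≠ π i := fun hh => by
        have := π.injective hh
        rw [this] at heT
        exact absurd heT.1 (not_lt.2 (le_of_lt hij))
      exact lt_of_le_of_ne (not_lt.mp h2) (Ne.symm h3)
    obtain ⟨e, hje, hej, hie⟩ := hse
    obtain ⟨l, hjl, hgl⟩ := gt_of_lcode_lt hne
    have hel : e ≠ l := fun h => by rw [h] at hej; exact absurd (lt_trans hgl hej) (lt_irrefl _)
    rcases contains_of_chain hij hje hjl hel hie hej hgl with h | h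
    · exact hav1 h
    · exact hav2 h
  · intro hc
    constructor
    · intro ⟨f, hf, hiff⟩
      -- 1324 : π f0 < π f2 < π f1 < π f3
      have v1 : π (f 0) < π (f 2) := (hiff 0 2).mpr (by decide)
      have v2 : π (f 2) < π (f 1) := (hiff 2 1).mpr (by decide)
      have v3 : π (f 1) < π (f 3) := (hiff 1 3).mpr (by decide)
      exact not_cond_of (hf (by decide : (0:Fin 4) < 1)) (hf (by decide : (1:Fin 4) < 2))
        (hf (by decide : (1:Fin 4) < 3)) v1 v2 v3 hc
    · intro ⟨f, hf, hiff⟩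
      -- 1342 : π f0 < π f3 < π f1 < π f2
      have v1 : π (f 0) < π (f 3) := (hiff 0 3).mpr (by decide)
      have v2 : π (f 3) < π (f 1) := (hiff 3 1).mpr (by decide)
      have v3 : π (f 1) < π (f 2) := (hiff 1 2).mpr (by decide)
      exact not_cond_of (hf (by decide : (0:Fin 4) < 1)) (hf (by decide : (1:Fin 4) < 3))
        (hf (by decide : (1:Fin 4) < 2)) v1 v2 v3 hc



/-- Valid code of a permutation of `Fin n` with `k` inversions satisfying the condition. -/
def ValidCode (n k : ℕ) (c : ℕ → ℕ) : Prop :=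
  (∀ j, j < n → c j + j + 1 ≤ n) ∧ (∀ j, n ≤ j → c j = 0) ∧
  (∑ j ∈ Finset.range n, c j) = k ∧
  (∀ i j, i < j → c i < c j → c j + j + 1 = n)

def encodeC (n : ℕ) (L : List ℕ) (M : Finset ℕ) : ℕ → ℕ := fun j =>
  if h : j < L.length then L.get ⟨j, h⟩
  else if j + 1 < n ∧ n - 1 - j ∈ M then n - 1 - j else 0

section listfacts

theorem list_get_add_le (L : List ℕ) (hL1 : ∀ x ∈ L, x ≠ 0) :
    ∀ (j : ℕ) (h : j < L.length), L.get ⟨j, h⟩ + j ≤ L.sum := by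
  induction L with
  | nil => intro j h; simp at h
  | cons a L ih =>
    intro j h
    cases j with
    | zero => simp
    | succ j =>
      have h' : j < L.length := by simpa using h
      have := ih (fun x hx => hL1 x (List.mem_cons_of_mem a hx)) j h'
      have ha : 1 ≤ a := Nat.one_le_iff_ne_zero.2 (hL1 a (List.mem_cons_self))
      simp only [List.get_cons_succ, List.sum_cons]
      omega

theorem list_length_le_sum (L : List ℕ) (hL1 : ∀ x ∈ L, x ≠ 0) : L.length ≤ L.sum := by
  induction L with
  | nil => simp
  | cons a L ih =>
    have ha : 1 ≤ a := Nat.one_le_iff_ne_zero.2 (hL1 a (List.mem_cons_self))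
    have := ih (fun x hx => hL1 x (List.mem_cons_of_mem a hx))
    simp only [List.length_cons, List.sum_cons]
    omega

theorem sum_range_list (f : ℕ → ℕ) (t : ℕ) :
    ∑ j ∈ Finset.range t, f j = ((List.range t).map f).sum := by
  induction t with
  | zero => simp
  | succ t ih => rw [Finset.sum_range_succ, List.range_succ]; simp [ih]

end listfacts

section encode

variable {n k : ℕ} (L : List ℕ) (M : Finset ℕ)
variable (hL1 : ∀ x ∈ L, x ≠ 0) (hL2 : List.Pairwise (· ≥ ·) L)
variable (hM : ∀ m ∈ M, m ≠ 0) (hsum : L.sum + ∑ m ∈ M, m = k) (hn : k + 2 ≤ n)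

include hL1 hsum hn in
theorem encode_bound : ∀ j, j < n → encodeC n L M j + j + 1 ≤ n := by
  intro j hj
  rw [encodeC]
  split
  · next h =>
    have := list_get_add_le L hL1 j h
    omega
  · split
    · next h => omega
    · omega

include hL1 hsum hn in
theorem encode_zero_of_ge : ∀ j, n ≤ j → encodeC n L M j = 0 := by
  intro j hj
  have hlen : L.length ≤ L.sum := list_length_le_sum L hL1
  rw [encodeC, dif_neg (by omega), if_neg (by omega)]

include hL1 hL2 hsum hn in
theorem encode_cond : ∀ i j, i < j → encodeC n L M i < encodeC n L M j →
    encodeC n L M j + j + 1 = n := by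
  intro i j hij hlt
  by_cases hj : j < L.length
  · exfalso
    have hi : i < L.length := lt_trans hij hj
    rw [encodeC, dif_pos hi] at hlt
    rw [encodeC, dif_pos hj] at hlt
    have := List.Pairwise.rel_get_of_lt hL2 (show (⟨i, hi⟩ : Fin L.length) < ⟨j, hj⟩ from hij)
    exact absurd hlt (not_lt.2 this)
  · by_cases hb : j + 1 < n ∧ n - 1 - j ∈ M
    · rw [encodeC, dif_neg hj, if_pos hb]
      omega
    · exfalso
      have h0 : encodeC n L M j = 0 := by rw [encodeC, dif_neg hj, if_neg hb]
      omega

include hL1 hM hsum hn in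
theorem encode_sum : ∑ j ∈ Finset.range n, encodeC n L M j = k := by
  have hlen : L.length ≤ L.sum := list_length_le_sum L hL1
  have hlenn : L.length ≤ n := by omega
  rw [Finset.range_eq_Ico, ← Finset.sum_Ico_consecutive _ (Nat.zero_le L.length) hlenn]
  have h1 : ∑ j ∈ Finset.Ico 0 L.length, encodeC n L M j = L.sum := by
    rw [← Finset.range_eq_Ico]
    rw [show L.sum = ((List.range L.length).map (encodeC n L M)).sum from ?_]
    · exact sum_range_list _ _
    · congr 1
      apply List.ext_getElem
      · simp
      · intro j h1' h2'
        simp only [List.getElem_map, List.getElem_range]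
        rw [encodeC, dif_pos (by simpa using h1')]
        rfl
  have h2 : ∑ j ∈ Finset.Ico L.length n, encodeC n L M j = ∑ m ∈ M, m := by
    have hpoint : ∀ j ∈ Finset.Ico L.length n, encodeC n L M j
        = if (j + 1 < n ∧ n - 1 - j ∈ M) then n - 1 - j else 0 := by
      intro j hj
      simp only [Finset.mem_Ico] at hj
      rw [encodeC, dif_neg (by omega)]
    rw [Finset.sum_congr rfl hpoint, ← Finset.sum_filter]
    apply Finset.sum_nbij' (i := fun j => n - 1 - j) (j := fun m => n - 1 - m)
    · intro j hj
      simp only [Finset.mem_filter, Finset.mem_Ico] at hj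
      exact hj.2.2
    · intro m hm
      have hm1 : m ≠ 0 := hM m hm
      have hmle : m ≤ ∑ x ∈ M, x := Finset.single_le_sum (fun i _ => Nat.zero_le i) hm
      simp only [Finset.mem_filter, Finset.mem_Ico]
      refine ⟨⟨by omega, by omega⟩, by omega, ?_⟩
      rw [show n - 1 - (n - 1 - m) = m by omega]
      exact hm
    · intro j hj
      simp only [Finset.mem_filter, Finset.mem_Ico] at hj
      omega
    · intro m hm
      have hm1 : m ≠ 0 := hM m hm
      have hmle : m ≤ ∑ x ∈ M, x := Finset.single_le_sum (fun i _ => Nat.zero_le i) hm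
      omega
    · intro j hj; rfl
  rw [h1, h2, hsum]

end encode



section extract

variable {n k : ℕ} {c : ℕ → ℕ}

/-- existence of a zero value -/
theorem exists_zero (hv : ValidCode n k c) : ∃ j, c j = 0 := ⟨n, hv.2.1 n le_rfl⟩

noncomputable def tOf (hv : ValidCode n k c) : ℕ := Nat.find (exists_zero hv)

noncomputable def MOf (hv : ValidCode n k c) : Finset ℕ :=
  ((Finset.Ico (tOf hv) n).filter fun j => c j ≠ 0).image c

noncomputable def LOf (hv : ValidCode n k c) : List ℕ := (List.range (tOf hv)).map c

theorem tOf_zero (hv : ValidCode n k c) : c (tOf hv) = 0 := Nat.find_spec (exists_zero hv)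

theorem tOf_pos (hv : ValidCode n k c) : ∀ j, j < tOf hv → c j ≠ 0 :=
  fun j hj => Nat.find_min (exists_zero hv) hj

theorem tOf_le (hv : ValidCode n k c) : tOf hv ≤ n := Nat.find_min' (exists_zero hv) (hv.2.1 n le_rfl)

/-- exempt positions are after the prefix -/
theorem exempt_after (hv : ValidCode n k c) (hn : k + 2 ≤ n) :
    ∀ j, c j ≠ 0 → c j + j + 1 = n → tOf hv < j := by
  intro j hj0 hjm
  rcases Nat.lt_or_ge (tOf hv) j with h | h
  · exact h
  exfalso
  -- j ≤ tOf, so all i < j have c i ≠ 0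
  have hpos : ∀ i, i < j → 1 ≤ c i := by
    intro i hi
    exact Nat.one_le_iff_ne_zero.2 (tOf_pos hv i (lt_of_lt_of_le hi h))
  have hjn : j < n := by omega
  have h1 : j ≤ ∑ i ∈ Finset.range j, c i := by
    calc j = ∑ _i ∈ Finset.range j, 1 := by simp
    _ ≤ ∑ i ∈ Finset.range j, c i := Finset.sum_le_sum (fun i hi => hpos i (Finset.mem_range.1 hi))
  have h2 : ∑ i ∈ Finset.range (j+1), c i ≤ k := by
    rw [← hv.2.2.1]
    exact Finset.sum_le_sum_of_subset (Finset.range_subset_range.2 (by omega))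
  rw [Finset.sum_range_succ] at h2
  omega

theorem exempt_of_after (hv : ValidCode n k c) :
    ∀ j, tOf hv ≤ j → c j ≠ 0 → c j + j + 1 = n := by
  intro j hj hj0
  have hne : j ≠ tOf hv := fun h => hj0 (h ▸ tOf_zero hv)
  exact hv.2.2.2 (tOf hv) j (by omega) (by rw [tOf_zero hv]; omega)

theorem prefix_sorted (hv : ValidCode n k c) (hn : k + 2 ≤ n) :
    ∀ i j, i < j → j < tOf hv → c j ≤ c i := by
  intro i j hij hj
  by_contra hcon
  have hmax := hv.2.2.2 i j hij (by omega)
  have hj0 : c j ≠ 0 := by omega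
  exact absurd (exempt_after hv hn j hj0 hmax) (by omega)

theorem MOf_mem (hv : ValidCode n k c) (hn : k + 2 ≤ n) :
    ∀ m ∈ MOf hv, m ≠ 0 ∧ m + tOf hv + 2 ≤ n := by
  intro m hm
  rw [MOf, Finset.mem_image] at hm
  obtain ⟨j, hj, rfl⟩ := hm
  simp only [Finset.mem_filter, Finset.mem_Ico] at hj
  obtain ⟨⟨hj1, hj2⟩, hj3⟩ := hj
  have hmax := exempt_of_after hv j hj1 hj3
  have hta := exempt_after hv hn j hj3 hmax
  exact ⟨hj3, by omega⟩

theorem sum_split (hv : ValidCode n k c) (hn : k + 2 ≤ n) :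
    (LOf hv).sum + ∑ m ∈ MOf hv, m = k := by
  have h0 : ∑ j ∈ Finset.range (tOf hv), c j = (LOf hv).sum := by
    rw [LOf]
    induction (tOf hv) with
    | zero => simp
    | succ t ih => rw [Finset.sum_range_succ, List.range_succ]; simp [ih]
  have h1 : ∑ j ∈ Finset.Ico (tOf hv) n, c j = ∑ m ∈ MOf hv, m := by
    rw [← Finset.sum_filter_ne_zero (s := Finset.Ico (tOf hv) n) (f := c)]
    rw [MOf]
    rw [Finset.sum_image]
    intro x hx y hy hxy
    simp only [Finset.mem_coe, Finset.mem_filter, Finset.mem_Ico] at hx hy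
    have hx' := exempt_of_after hv x hx.1.1 hx.2
    have hy' := exempt_of_after hv y hy.1.1 hy.2
    omega
  have h2 := Finset.sum_Ico_consecutive c (Nat.zero_le (tOf hv)) (tOf_le hv)
  rw [← Finset.range_eq_Ico, ← Finset.range_eq_Ico] at h2
  have h3 := hv.2.2.1
  omega

theorem LOf_pos (hv : ValidCode n k c) : ∀ x ∈ LOf hv, x ≠ 0 := by
  intro x hx
  rw [LOf, List.mem_map] at hx
  obtain ⟨j, hj, rfl⟩ := hx
  rw [List.mem_range] at hj
  exact tOf_pos hv j hj

theorem LOf_sorted (hv : ValidCode n k c) (hn : k + 2 ≤ n) : List.Pairwise (· ≥ ·) (LOf hv) := by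
  have hlen : (LOf hv).length = tOf hv := by simp [LOf]
  rw [List.pairwise_iff_getElem]
  intro i j hi hj hij
  simp only [LOf, List.getElem_map, List.getElem_range]
  exact prefix_sorted hv hn i j hij (by omega)

/-- roundtrip : encode of the extraction gives back the code -/
theorem encode_extract (hv : ValidCode n k c) (hn : k + 2 ≤ n) :
    encodeC n (LOf hv) (MOf hv) = c := by
  funext j
  have hlen : (LOf hv).length = tOf hv := by rw [LOf]; simp
  by_cases hj : j < tOf hv
  · rw [encodeC, dif_pos (by omega)]
    simp only [LOf, List.get_eq_getElem, List.getElem_map, List.getElem_range]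
  · rw [encodeC, dif_neg (by omega)]
    by_cases hj0 : c j = 0
    · rw [if_neg, hj0]
      rintro ⟨hj1, hj2⟩
      rw [MOf, Finset.mem_image] at hj2
      obtain ⟨j', hj', hjj⟩ := hj2
      simp only [Finset.mem_filter, Finset.mem_Ico] at hj'
      have := exempt_of_after hv j' hj'.1.1 hj'.2
      have hjeq : j' = j := by omega
      subst hjeq
      exact hj'.2 hj0
    · have hmax := exempt_of_after hv j (by omega) hj0
      rw [if_pos]
      · omega
      constructor
      · omega
      · rw [MOf, Finset.mem_image]
        refine ⟨j, ?_, by omega⟩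
        simp only [Finset.mem_filter, Finset.mem_Ico]
        exact ⟨⟨by omega, by omega⟩, hj0⟩

end extract


section roundtrip

variable {n k : ℕ} {L : List ℕ} {M : Finset ℕ}
variable (hL1 : ∀ x ∈ L, x ≠ 0) (hL2 : List.Pairwise (· ≥ ·) L)
variable (hM : ∀ m ∈ M, m ≠ 0) (hsum : L.sum + ∑ m ∈ M, m = k) (hn : k + 2 ≤ n)

include hL1 hL2 hM hsum hn

theorem encode_valid : ValidCode n k (encodeC n L M) :=
  ⟨encode_bound L M hL1 hsum hn, encode_zero_of_ge L M hL1 hsum hn,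
   encode_sum L M hL1 hM hsum hn, encode_cond L M hL1 hL2 hsum hn⟩

theorem encode_at_length : encodeC n L M L.length = 0 := by
  have hlen : L.length ≤ L.sum := list_length_le_sum L hL1
  rw [encodeC, dif_neg (lt_irrefl _)]
  by_cases hb : L.length + 1 < n
  · rw [if_neg]
    rintro ⟨h1, h2⟩
    have hle : n - 1 - L.length ≤ ∑ m ∈ M, m :=
      Finset.single_le_sum (fun i _ => Nat.zero_le i) h2
    omega
  · rw [if_neg (fun h => hb h.1)]

theorem tOf_encode : tOf (encode_valid hL1 hL2 hM hsum hn) = L.length := by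
  rw [tOf, Nat.find_eq_iff]
  refine ⟨encode_at_length hL1 hL2 hM hsum hn, ?_⟩
  intro j hj
  rw [encodeC, dif_pos hj]
  exact hL1 _ (List.get_mem L _)

theorem LOf_encode : LOf (encode_valid hL1 hL2 hM hsum hn) = L := by
  rw [LOf, tOf_encode hL1 hL2 hM hsum hn]
  apply List.ext_getElem
  · simp
  · intro j h1 h2
    simp only [List.getElem_map, List.getElem_range]
    rw [encodeC, dif_pos h2]
    rfl

theorem MOf_encode : MOf (encode_valid hL1 hL2 hM hsum hn) = M := by
  have hlen : L.length ≤ L.sum := list_length_le_sum L hL1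
  rw [MOf, tOf_encode hL1 hL2 hM hsum hn]
  ext m
  rw [Finset.mem_image]
  constructor
  · rintro ⟨j, hj, rfl⟩
    simp only [Finset.mem_filter, Finset.mem_Ico] at hj
    obtain ⟨⟨hj1, hj2⟩, hj3⟩ := hj
    rw [encodeC, dif_neg (by omega)] at hj3 ⊢
    by_cases hb : j + 1 < n ∧ n - 1 - j ∈ M
    · rw [if_pos hb]; exact hb.2
    · rw [if_neg hb] at hj3; exact absurd rfl hj3
  · intro hm
    have hm0 : m ≠ 0 := hM m hm
    have hmle : m ≤ ∑ x ∈ M, x := Finset.single_le_sum (fun i _ => Nat.zero_le i) hm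
    refine ⟨n - 1 - m, ?_, ?_⟩
    · simp only [Finset.mem_filter, Finset.mem_Ico]
      refine ⟨⟨by omega, by omega⟩, ?_⟩
      rw [encodeC, dif_neg (by omega), if_pos ⟨by omega, by rw [show n-1-(n-1-m) = m by omega]; exact hm⟩]
      omega
    · rw [encodeC, dif_neg (by omega), if_pos ⟨by omega, by rw [show n-1-(n-1-m) = m by omega]; exact hm⟩]
      omega

end roundtrip

section bridge

variable {n k : ℕ}

/-- The code of a permutation as a function on `ℕ`. -/
def ncode (π : Equiv.Perm (Fin n)) : ℕ → ℕ := fun j => if h : j < n then lcode π ⟨j, h⟩ else 0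

theorem ncode_sum (π : Equiv.Perm (Fin n)) : ∑ j ∈ Finset.range n, ncode π j = invCount π := by
  rw [invCount_eq_sum, ← Fin.sum_univ_eq_sum_range]
  refine Finset.sum_congr rfl fun j _ => ?_
  rw [ncode, dif_pos j.2]

theorem ncode_cond_iff (π : Equiv.Perm (Fin n)) :
    Cond π ↔ (∀ i j, i < j → ncode π i < ncode π j → ncode π j + j + 1 = n) := by
  constructor
  · intro hc i j hij hlt
    by_cases hj : j < n
    · have hi : i < n := by omega
      rw [ncode, dif_pos hi] at hlt
      rw [ncode, dif_pos hj] at hlt ⊢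
      exact hc ⟨i, hi⟩ ⟨j, hj⟩ hij hlt
    · have h0 : ncode π j = 0 := by rw [ncode, dif_neg hj]
      omega
  · intro hc i j hij hlt
    have := hc i j hij (by rw [ncode, dif_pos i.2, ncode, dif_pos j.2]; simpa using hlt)
    rw [ncode, dif_pos j.2] at this
    simpa using this

theorem valid_iff (π : Equiv.Perm (Fin n)) :
    ValidCode n k (ncode π) ↔
      (invCount π = k ∧ Avoids π p1324 ∧ Avoids π p1342) := by
  constructor
  · intro hv
    refine ⟨by rw [← ncode_sum]; exact hv.2.2.1, ?_⟩
    rw [avoids_iff, ncode_cond_iff]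
    exact hv.2.2.2
  · intro ⟨hinv, hav⟩
    rw [avoids_iff, ncode_cond_iff] at hav
    refine ⟨?_, ?_, ?_, hav⟩
    · intro j hj
      rw [ncode, dif_pos hj]
      simpa using lcode_le π ⟨j, hj⟩
    · intro j hj
      rw [ncode, dif_neg (by omega)]
    · rw [ncode_sum]; exact hinv

end bridge

section assembly

abbrev PairsType (k : ℕ) : Type :=
  Σ i : Fin (k+1), Nat.Partition (i : ℕ) × {μ : Nat.Partition (k - (i : ℕ)) // μ.parts.Nodup}

def xL {k : ℕ} (x : PairsType k) : List ℕ := (Multiset.sort x.2.1.parts (· ≤ ·)).reverse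

def xM {k : ℕ} (x : PairsType k) : Finset ℕ := ⟨x.2.2.1.parts, x.2.2.2⟩

theorem xL_coe {k : ℕ} (x : PairsType k) : (↑(xL x) : Multiset ℕ) = x.2.1.parts := by
  rw [xL, Multiset.coe_reverse, Multiset.sort_eq]

theorem xL_pos {k : ℕ} (x : PairsType k) : ∀ y ∈ xL x, y ≠ 0 := by
  intro y hy
  have : y ∈ (↑(xL x) : Multiset ℕ) := Multiset.mem_coe.mpr hy
  rw [xL_coe] at this
  exact (x.2.1.parts_pos this).ne'

theorem xL_sorted {k : ℕ} (x : PairsType k) : List.Pairwise (· ≥ ·) (xL x) := by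
  rw [xL, List.pairwise_reverse]
  exact Multiset.pairwise_sort _ (· ≤ ·)

theorem xL_sum {k : ℕ} (x : PairsType k) : (xL x).sum = (x.1 : ℕ) := by
  have h := Multiset.sum_coe (xL x)
  rw [xL_coe, x.2.1.parts_sum] at h
  exact h.symm

theorem xM_pos {k : ℕ} (x : PairsType k) : ∀ m ∈ xM x, m ≠ 0 := by
  intro m hm
  exact (x.2.2.1.parts_pos (by exact hm)).ne'

theorem xM_sum {k : ℕ} (x : PairsType k) : ∑ m ∈ xM x, m = k - (x.1 : ℕ) := by
  rw [Finset.sum_eq_multiset_sum]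
  have : Multiset.map (fun m => m) (xM x).val = (xM x).val := by simp
  rw [this]
  exact x.2.2.1.parts_sum

theorem xsum {k : ℕ} (x : PairsType k) : (xL x).sum + ∑ m ∈ xM x, m = k := by
  rw [xL_sum, xM_sum]
  have := x.1.2
  omega

theorem xvalid {n k : ℕ} (hn : k + 2 ≤ n) (x : PairsType k) :
    ValidCode n k (encodeC n (xL x) (xM x)) :=
  encode_valid (xL_pos x) (xL_sorted x) (xM_pos x) (xsum x) hn

def xperm (n : ℕ) {k : ℕ} (x : PairsType k) : Equiv.Perm (Fin n) :=
  decode (fun j => encodeC n (xL x) (xM x) j.val)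

theorem xlcode {n k : ℕ} (hn : k + 2 ≤ n) (x : PairsType k) (j : Fin n) :
    lcode (xperm n x) j = encodeC n (xL x) (xM x) j.val := by
  apply lcode_decode
  intro i
  have := (xvalid hn x).1 i.val i.2
  omega

theorem xncode {n k : ℕ} (hn : k + 2 ≤ n) (x : PairsType k) :
    ncode (xperm n x) = encodeC n (xL x) (xM x) := by
  funext j
  by_cases hj : j < n
  · rw [ncode, dif_pos hj, xlcode hn x ⟨j, hj⟩]
  · rw [ncode, dif_neg hj, (xvalid hn x).2.1 j (by omega)]

theorem LOf_congr {n k : ℕ} {c1 c2 : ℕ → ℕ} (h : c1 = c2)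
    (hv1 : ValidCode n k c1) (hv2 : ValidCode n k c2) : LOf hv1 = LOf hv2 := by
  subst h; rfl

theorem MOf_congr {n k : ℕ} {c1 c2 : ℕ → ℕ} (h : c1 = c2)
    (hv1 : ValidCode n k c1) (hv2 : ValidCode n k c2) : MOf hv1 = MOf hv2 := by
  subst h; rfl

theorem xperm_mem {n k : ℕ} (hn : k + 2 ≤ n) (x : PairsType k) :
    invCount (xperm n x) = k ∧ Avoids (xperm n x) p1324 ∧ Avoids (xperm n x) p1342 :=
  (valid_iff _).mp (by rw [xncode hn x]; exact xvalid hn x)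

theorem xperm_inj {n k : ℕ} (hn : k + 2 ≤ n) {x y : PairsType k}
    (h : xperm n x = xperm n y) : x = y := by
  have hcode : encodeC n (xL x) (xM x) = encodeC n (xL y) (xM y) := by
    rw [← xncode hn x, ← xncode hn y, h]
  have hL : xL x = xL y := by
    calc xL x = LOf (xvalid hn x) :=
          (LOf_encode (xL_pos x) (xL_sorted x) (xM_pos x) (xsum x) hn).symm
      _ = LOf (xvalid hn y) := LOf_congr hcode _ _
      _ = xL y := LOf_encode (xL_pos y) (xL_sorted y) (xM_pos y) (xsum y) hn
  have hM : xM x = xM y := by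
    calc xM x = MOf (xvalid hn x) :=
          (MOf_encode (xL_pos x) (xL_sorted x) (xM_pos x) (xsum x) hn).symm
      _ = MOf (xvalid hn y) := MOf_congr hcode _ _
      _ = xM y := MOf_encode (xL_pos y) (xL_sorted y) (xM_pos y) (xsum y) hn
  obtain ⟨i1, p1, q1⟩ := x
  obtain ⟨i2, p2, q2⟩ := y
  have hparts : p1.parts = p2.parts := by
    rw [← xL_coe ⟨i1, p1, q1⟩, ← xL_coe ⟨i2, p2, q2⟩]
    exact_mod_cast congrArg (fun l : List ℕ => (↑l : Multiset ℕ)) hL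
  have hi : i1 = i2 := by
    apply Fin.ext
    rw [← xL_sum ⟨i1, p1, q1⟩, ← xL_sum ⟨i2, p2, q2⟩, hL]
  subst hi
  have hp : p1 = p2 := Nat.Partition.ext hparts
  have hq : q1 = q2 := by
    apply Subtype.ext
    apply Nat.Partition.ext
    have : (xM ⟨i1, p1, q1⟩).val = (xM ⟨i1, p2, q2⟩).val := by rw [hM]
    exact this
  rw [hp, hq]

theorem xperm_surj {n k : ℕ} (hn : k + 2 ≤ n) (π : Equiv.Perm (Fin n))
    (hmem : invCount π = k ∧ Avoids π p1324 ∧ Avoids π p1342) :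
    ∃ x : PairsType k, xperm n x = π := by
  have hv : ValidCode n k (ncode π) := (valid_iff π).mpr hmem
  have hsp := sum_split hv hn
  have hile : (LOf hv).sum ≤ k := by omega
  have hμsum : (MOf hv).val.sum = k - (LOf hv).sum := by
    have h1 : ∑ m ∈ MOf hv, m = (MOf hv).val.sum := by
      rw [Finset.sum_eq_multiset_sum]
      congr 1
      simp
    omega
  refine ⟨⟨⟨(LOf hv).sum, by omega⟩,
    ⟨⟨(↑(LOf hv) : Multiset ℕ), ?_, ?_⟩,
     ⟨⟨(MOf hv).val, ?_, ?_⟩, (MOf hv).nodup⟩⟩⟩, ?_⟩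
  · intro i hi
    exact Nat.pos_of_ne_zero (LOf_pos hv i (Multiset.mem_coe.mp hi))
  · exact Multiset.sum_coe _
  · intro m hm
    exact Nat.pos_of_ne_zero ((MOf_mem hv hn m hm).1)
  · exact hμsum
  · set x : PairsType k := ⟨⟨(LOf hv).sum, by omega⟩,
      ⟨⟨(↑(LOf hv) : Multiset ℕ), _, _⟩, ⟨⟨(MOf hv).val, _, _⟩, (MOf hv).nodup⟩⟩⟩ with hx
    apply lcode_injective
    intro j
    rw [xlcode hn x j]
    have hLx : xL x = LOf hv := by
      rw [xL]
      show (Multiset.sort (↑(LOf hv) : Multiset ℕ) (· ≤ ·)).reverse = LOf hv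
      have hperm : List.Perm (Multiset.sort (↑(LOf hv) : Multiset ℕ) (· ≤ ·))
          (LOf hv).reverse := by
        apply Multiset.coe_eq_coe.mp
        rw [Multiset.sort_eq, Multiset.coe_reverse]
      have hs2 : (LOf hv).reverse.Pairwise (· ≤ ·) := by
        rw [List.pairwise_reverse]
        exact LOf_sorted hv hn
      rw [List.Perm.eq_of_pairwise' (Multiset.pairwise_sort _ _) hs2 hperm, List.reverse_reverse]
    have hMx : xM x = MOf hv := Finset.val_inj.mp rfl
    rw [hLx, hMx, encode_extract hv hn]
    rw [ncode, dif_pos j.2]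

theorem card_pairs (k n : ℕ) (hn : k + 2 ≤ n) :
    Nat.card {π : Equiv.Perm (Fin n) // invCount π = k ∧
      Avoids π p1324 ∧ Avoids π p1342} = Nat.card (PairsType k) := by
  apply Nat.card_congr
  exact (Equiv.ofBijective (fun x : PairsType k => (⟨xperm n x, xperm_mem hn x⟩ :
      {π : Equiv.Perm (Fin n) // invCount π = k ∧ Avoids π p1324 ∧ Avoids π p1342}))
    ⟨fun x y hxy => xperm_inj hn (congrArg Subtype.val hxy),
     fun ⟨π, hmem⟩ => by
       obtain ⟨x, hx⟩ := xperm_surj hn π hmem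
       exact ⟨x, Subtype.ext hx⟩⟩).symm

theorem card_pairs_op (k : ℕ) :
    Nat.card (PairsType k) = ∑ i ∈ Finset.range (k + 1),
      Nat.card (Nat.Partition i) * Nat.card {μ : Nat.Partition (k - i) // μ.parts.Nodup} := by
  classical
  rw [Nat.card_eq_fintype_card, Fintype.card_sigma,
    ← Fin.sum_univ_eq_sum_range
      (fun i => Nat.card (Nat.Partition i) * Nat.card {μ : Nat.Partition (k - i) // μ.parts.Nodup})
      (k+1)]
  refine Finset.sum_congr rfl fun i _ => ?_
  rw [Fintype.card_prod, Nat.card_eq_fintype_card, Nat.card_eq_fintype_card]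

end assembly

end AV

section Main

open AV

set_option maxHeartbeats 1000000 in
/-- For every `k ≥ 0` and every `n ≥ k + 2`, the number of permutations of length `n`
with exactly `k` inversions avoiding both 1324 and 1342 equals `op(k)`,
the number of overpartitions of `k`. -/
theorem av_1324_1342_eq (k n : ℕ) (hn : k + 2 ≤ n) :
    Nat.card {π : Equiv.Perm (Fin n) // invCount π = k ∧
      Avoids π p1324 ∧ Avoids π p1342} = op k := by
  rw [op, ← AV.card_pairs_op k, ← AV.card_pairs k n hn]

end Main
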